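/- Let c > 0, β > 0, m > 0, and let v solve m v' = -(β²/(2c)) v/(c² - v²) with |v(0)| < c, y(t) = ∫₀ᵗ v. Define the total energy H(t) = T_p(t) + T_f(t) + U_ff(t) + U_fp(t), where T_p = (m/2)v², U_fp(t) = -(β²/(2c))t, and T_f(t) = U_ff(t) = (c²/2)∫ g_t(x)² dx with g_t as in the delta-interaction solution. Then H is constant in t. -/

import Mathlib

open MeasureTheory

/-- conservation of the total energy
`H = T_p + T_f + U_ff + U_fp` for the self-consistent delta solution, where
`T_p = (m/2)v²`, `T_f = U_ff = (c²/2)∫ g²`, `U_fp = -(β²/(2c)) t`. -/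
theorem stmt_13 (c β m : ℝ) (hc : 0 < c) (hβ : 0 < β) (hm : 0 < m)
    (v : ℝ → ℝ)
    (hv : ∀ t ∈ Set.Ici (0:ℝ),
      HasDerivAt v (-(β^2/(2*c)) * (v t / (c^2 - (v t)^2)) / m) t)
    (h0 : |v 0| < c)
    (y : ℝ → ℝ) (hy : ∀ t, y t = ∫ s in (0:ℝ)..t, v s)
    (τf : ℝ → ℝ → ℝ)
    (hτ1 : ∀ t > (0:ℝ), ∀ x ∈ Set.Icc (-(c*t)) (y t),
      τf t x ∈ Set.Icc (0:ℝ) t ∧ x = y (τf t x) - c*(t - τf t x))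
    (hτ2 : ∀ t > (0:ℝ), ∀ x ∈ Set.Icc (y t) (c*t),
      τf t x ∈ Set.Icc (0:ℝ) t ∧ x = y (τf t x) + c*(t - τf t x))
    (hτ3 : ∀ t > (0:ℝ), ∀ x, x ∉ Set.Icc (-(c*t)) (c*t) → τf t x = 0)
    (g : ℝ → ℝ → ℝ)
    (hg1 : ∀ t > (0:ℝ), ∀ x ∈ Set.Ioo (-(c*t)) (y t),
      g t x = (β/(2*c)) * (1/(c + v (τf t x))))
    (hg2 : ∀ t > (0:ℝ), ∀ x ∈ Set.Ioo (y t) (c*t),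
      g t x = -((β/(2*c)) * (1/(c - v (τf t x)))))
    (hg3 : ∀ t > (0:ℝ), ∀ x, x ∉ Set.Icc (-(c*t)) (c*t) → g t x = 0)
    (H : ℝ → ℝ)
    (hH : ∀ t, H t = (m/2) * (v t)^2 + 2 * ((c^2/2) * ∫ x : ℝ, (g t x)^2)
      + (-(β^2/(2*c)) * t)) :
    ∀ t₁ > (0:ℝ), ∀ t₂ > (0:ℝ), H t₁ = H t₂ := by
  have hcne : c ≠ 0 := ne_of_gt hc
  -- the continuous extension `w` of `v` to the whole line
  have hvc : ∀ s : ℝ, 0 ≤ s → ContinuousAt v s := fun s hs => (hv s hs).continuousAt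
  set w : ℝ → ℝ := fun s => v (max s 0) with hw
  have hws : ∀ s : ℝ, 0 ≤ s → w s = v s := fun s hs => by simp [hw, max_eq_left hs]
  have hwc : Continuous w := by
    rw [continuous_iff_continuousAt]
    intro s
    have h1 : Continuous (fun b : ℝ => max b 0) := continuous_id.max continuous_const
    have h2 : ContinuousAt v ((fun b : ℝ => max b 0) s) := hvc _ (le_max_right s 0)
    have h3 := ContinuousAt.comp (g := v) (f := fun b : ℝ => max b 0) (x := s) h2 h1.continuousAt
    exact h3
  -- `|v|` stays below `c`
  have hv02 : (v 0)^2 < c^2 := by nlinarith [abs_lt.1 h0, abs_nonneg (v 0)]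
  have hlt : ∀ s : ℝ, 0 ≤ s → (v s)^2 < c^2 := by
    by_contra hcon
    push_neg at hcon
    obtain ⟨s₀, hs₀, hs₀c⟩ := hcon
    set S : Set ℝ := {s : ℝ | 0 ≤ s ∧ c^2 ≤ (v s)^2} with hS
    have hSc : IsClosed S := by
      have : S = Set.Ici 0 ∩ (fun s => (w s)^2) ⁻¹' Set.Ici (c^2) := by
        ext s
        simp only [hS, Set.mem_setOf_eq, Set.mem_inter_iff, Set.mem_Ici, Set.mem_preimage]
        constructor
        · rintro ⟨h1, h2⟩; exact ⟨h1, by rwa [hws s h1]⟩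
        · rintro ⟨h1, h2⟩; exact ⟨h1, by rwa [hws s h1] at h2⟩
      rw [this]
      exact isClosed_Ici.inter (IsClosed.preimage (by fun_prop) isClosed_Ici)
    have hSb : BddBelow S := ⟨0, fun x hx => hx.1⟩
    have hTS : sInf S ∈ S := hSc.csInf_mem ⟨s₀, hs₀, hs₀c⟩ hSb
    set T := sInf S with hT
    have hT0 : 0 < T := by
      rcases lt_or_eq_of_le hTS.1 with h | h
      · exact h
      · exfalso; have h2 := hTS.2; rw [← h] at h2; linarith
    have hIlt : ∀ s ∈ Set.Ico (0:ℝ) T, (v s)^2 < c^2 := by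
      intro s hs
      by_contra h
      push_neg at h
      exact absurd (csInf_le hSb ⟨hs.1, h⟩) (not_le.2 hs.2)
    have hanti : AntitoneOn (fun s => (v s)^2) (Set.Icc 0 T) := by
      apply antitoneOn_of_deriv_nonpos (convex_Icc 0 T)
      · intro s hs
        exact ((hv s hs.1).pow 2).continuousAt.continuousWithinAt
      · intro s hs
        rw [interior_Icc] at hs
        exact ((hv s hs.1.le).pow 2).differentiableAt.differentiableWithinAt
      · intro s hs
        rw [interior_Icc] at hs
        have hd : HasDerivAt (fun s => v s ^ 2) _ s := (hv s hs.1.le).pow 2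
        rw [hd.deriv]
        have h1 : 0 < c^2 - (v s)^2 := sub_pos.2 (hIlt s ⟨hs.1.le, hs.2⟩)
        have heq : ((2:ℕ):ℝ) * v s ^ (2-1) * (-(β^2/(2*c)) * (v s / (c^2 - (v s)^2)) / m)
            = -(2 * (β^2/(2*c)) / m * ((v s)^2 / (c^2 - (v s)^2))) := by
          push_cast
          ring
        rw [heq, neg_nonpos]
        exact mul_nonneg (by positivity) (div_nonneg (sq_nonneg _) h1.le)
    have := hanti (Set.left_mem_Icc.2 hT0.le) (Set.right_mem_Icc.2 hT0.le) hT0.le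
    simp only at this
    have h2 := hTS.2
    linarith
  have hvpos : ∀ s : ℝ, 0 < c + w s ∧ 0 < c - w s := by
    intro s
    have := hlt (max s 0) (le_max_right s 0)
    have hww : w s = v (max s 0) := rfl
    constructor <;> nlinarith
  -- `Y`, the nice version of `y`
  set Y : ℝ → ℝ := fun r => ∫ u in (0:ℝ)..r, w u with hYdef
  have hYd : ∀ r, HasDerivAt Y (w r) r := fun r => (hwc.integral_hasStrictDerivAt 0 r).hasDerivAt
  have hyY : ∀ r : ℝ, 0 ≤ r → y r = Y r := by
    intro r hr
    rw [hy]
    apply intervalIntegral.integral_congr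
    intro u hu
    rw [Set.uIcc_of_le hr] at hu
    exact (hws u hu.1).symm
  have hY0 : Y 0 = 0 := intervalIntegral.integral_same
  have hyb : ∀ r : ℝ, 0 ≤ r → -(c*r) ≤ y r ∧ y r ≤ c*r := by
    intro r hr
    have hb : ‖∫ u in (0:ℝ)..r, w u‖ ≤ c * |r - 0| := by
      apply intervalIntegral.norm_integral_le_of_norm_le_const
      intro x _
      have h := hvpos x
      rw [Real.norm_eq_abs, abs_le]
      constructor <;> linarith [h.1, h.2]
    rw [hyY r hr]
    rw [Real.norm_eq_abs, sub_zero, abs_of_nonneg hr, abs_le] at hb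
    exact ⟨by linarith [hb.1], hb.2⟩
  -- continuous integrands after change of variables
  have hcont₁ : Continuous (fun s => (β/(2*c))^2 * (1/(c + w s))) :=
    continuous_const.mul (continuous_const.div (continuous_const.add hwc)
      (fun s => ne_of_gt (hvpos s).1))
  have hcont₂ : Continuous (fun s => (β/(2*c))^2 * (1/(c - w s))) :=
    continuous_const.mul (continuous_const.div (continuous_const.sub hwc)
      (fun s => ne_of_gt (hvpos s).2))
  -- Main key: evaluation of the field energy integral
  have key : ∀ t : ℝ, 0 < t → ∫ x : ℝ, (g t x)^2
      = (∫ s in (0:ℝ)..t, (β/(2*c))^2 * (1/(c + w s)))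
        + ∫ s in (0:ℝ)..t, (β/(2*c))^2 * (1/(c - w s)) := by
    intro t ht
    set φ₁ : ℝ → ℝ := fun s => Y s + c*s - c*t with hφ₁
    set φ₂ : ℝ → ℝ := fun s => Y s - c*s + c*t with hφ₂
    have hφ₁d : ∀ s, HasDerivAt φ₁ (w s + c) s := by
      intro s
      have h1 := ((hYd s).add ((hasDerivAt_id s).const_mul c)).sub_const (c*t)
      simpa [hφ₁, mul_comm] using h1
    have hφ₂d : ∀ s, HasDerivAt φ₂ (w s - c) s := by
      intro s
      have h1 := ((hYd s).sub ((hasDerivAt_id s).const_mul c)).add_const (c*t)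
      simpa [hφ₂, mul_comm] using h1
    have hm₁ : StrictMono φ₁ := strictMono_of_deriv_pos
      (fun s => by rw [(hφ₁d s).deriv]; linarith [(hvpos s).1])
    have hm₂ : StrictAnti φ₂ := strictAnti_of_deriv_neg
      (fun s => by rw [(hφ₂d s).deriv]; linarith [(hvpos s).2])
    have hφ₁0 : φ₁ 0 = -(c*t) := by simp [hφ₁, hY0]
    have hφ₁t : φ₁ t = y t := by rw [hyY t ht.le]; simp [hφ₁]
    have hφ₂0 : φ₂ 0 = c*t := by simp [hφ₂, hY0]
    have hφ₂t : φ₂ t = y t := by rw [hyY t ht.le]; simp [hφ₂]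
    have him₁ : φ₁ '' Set.Ioo 0 t = Set.Ioo (-(c*t)) (y t) := by
      apply Set.Subset.antisymm
      · rintro x ⟨s, hs, rfl⟩
        exact ⟨hφ₁0 ▸ hm₁ hs.1, hφ₁t ▸ hm₁ hs.2⟩
      · rw [← hφ₁0, ← hφ₁t]
        exact intermediate_value_Ioo ht.le
          (fun s _ => (hφ₁d s).continuousAt.continuousWithinAt)
    have him₂ : φ₂ '' Set.Ioo 0 t = Set.Ioo (y t) (c*t) := by
      apply Set.Subset.antisymm
      · rintro x ⟨s, hs, rfl⟩
        exact ⟨hφ₂t ▸ hm₂ hs.2, hφ₂0 ▸ hm₂ hs.1⟩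
      · rw [← hφ₂0, ← hφ₂t]
        exact intermediate_value_Ioo' ht.le
          (fun s _ => (hφ₂d s).continuousAt.continuousWithinAt)
    -- identification of the retarded time along the characteristics
    have hτφ₁ : ∀ s ∈ Set.Ioo (0:ℝ) t, τf t (φ₁ s) = s := by
      intro s hs
      have hx : φ₁ s ∈ Set.Ioo (-(c*t)) (y t) := him₁ ▸ Set.mem_image_of_mem _ hs
      obtain ⟨hτmem, hτeq⟩ := hτ1 t ht _ (Set.Ioo_subset_Icc_self hx)
      apply hm₁.injective
      show φ₁ (τf t (φ₁ s)) = φ₁ s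
      have hYτ := hyY _ hτmem.1
      have hgoal : φ₁ (τf t (φ₁ s)) = Y (τf t (φ₁ s)) + c * τf t (φ₁ s) - c * t := rfl
      rw [hgoal, ← hYτ]
      linarith [hτeq]
    have hτφ₂ : ∀ s ∈ Set.Ioo (0:ℝ) t, τf t (φ₂ s) = s := by
      intro s hs
      have hx : φ₂ s ∈ Set.Ioo (y t) (c*t) := him₂ ▸ Set.mem_image_of_mem _ hs
      obtain ⟨hτmem, hτeq⟩ := hτ2 t ht _ (Set.Ioo_subset_Icc_self hx)
      apply hm₂.injective
      show φ₂ (τf t (φ₂ s)) = φ₂ s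
      have hYτ := hyY _ hτmem.1
      have hgoal : φ₂ (τf t (φ₂ s)) = Y (τf t (φ₂ s)) - c * τf t (φ₂ s) + c * t := rfl
      rw [hgoal, ← hYτ]
      linarith [hτeq]
    -- the transported integrands
    have hub₁ : ∀ s ∈ Set.Ioo (0:ℝ) t,
        |w s + c| * (g t (φ₁ s))^2 = (β/(2*c))^2 * (1/(c + w s)) := by
      intro s hs
      have hx : φ₁ s ∈ Set.Ioo (-(c*t)) (y t) := him₁ ▸ Set.mem_image_of_mem _ hs
      rw [hg1 t ht _ hx, hτφ₁ s hs, ← hws s hs.1.le]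
      have h1 : 0 < c + w s := (hvpos s).1
      rw [abs_of_pos (by linarith)]
      field_simp
      ring
    have hub₂ : ∀ s ∈ Set.Ioo (0:ℝ) t,
        |w s - c| * (g t (φ₂ s))^2 = (β/(2*c))^2 * (1/(c - w s)) := by
      intro s hs
      have hx : φ₂ s ∈ Set.Ioo (y t) (c*t) := him₂ ▸ Set.mem_image_of_mem _ hs
      rw [hg2 t ht _ hx, hτφ₂ s hs, ← hws s hs.1.le]
      have h1 : 0 < c - w s := (hvpos s).2
      rw [abs_of_neg (by linarith), neg_sub]
      field_simp
    -- change of variables: the integrals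
    have hcv₁ : ∫ x in Set.Ioo (-(c*t)) (y t), (g t x)^2
        = ∫ s in Set.Ioo (0:ℝ) t, (β/(2*c))^2 * (1/(c + w s)) := by
      rw [← him₁, integral_image_eq_integral_abs_deriv_smul measurableSet_Ioo
        (fun s _ => (hφ₁d s).hasDerivWithinAt) hm₁.injective.injOn (fun x => (g t x)^2)]
      apply setIntegral_congr_fun measurableSet_Ioo
      intro s hs
      simpa [smul_eq_mul] using hub₁ s hs
    have hcv₂ : ∫ x in Set.Ioo (y t) (c*t), (g t x)^2
        = ∫ s in Set.Ioo (0:ℝ) t, (β/(2*c))^2 * (1/(c - w s)) := by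
      rw [← him₂, integral_image_eq_integral_abs_deriv_smul measurableSet_Ioo
        (fun s _ => (hφ₂d s).hasDerivWithinAt) hm₂.injective.injOn (fun x => (g t x)^2)]
      apply setIntegral_congr_fun measurableSet_Ioo
      intro s hs
      simpa [smul_eq_mul] using hub₂ s hs
    -- integrability of the pieces
    have hint₁ : IntegrableOn (fun x => (g t x)^2) (Set.Ioo (-(c*t)) (y t)) := by
      rw [← him₁, integrableOn_image_iff_integrableOn_abs_deriv_smul measurableSet_Ioo
        (fun s _ => (hφ₁d s).hasDerivWithinAt) hm₁.injective.injOn]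
      apply IntegrableOn.congr_fun _ _ measurableSet_Ioo
        (f := fun s => (β/(2*c))^2 * (1/(c + w s)))
      · exact (hcont₁.integrableOn_Icc (a := 0) (b := t)).mono_set Set.Ioo_subset_Icc_self
      · intro s hs
        simpa [smul_eq_mul] using (hub₁ s hs).symm
    have hint₂ : IntegrableOn (fun x => (g t x)^2) (Set.Ioo (y t) (c*t)) := by
      rw [← him₂, integrableOn_image_iff_integrableOn_abs_deriv_smul measurableSet_Ioo
        (fun s _ => (hφ₂d s).hasDerivWithinAt) hm₂.injective.injOn]
      apply IntegrableOn.congr_fun _ _ measurableSet_Ioo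
        (f := fun s => (β/(2*c))^2 * (1/(c - w s)))
      · exact (hcont₂.integrableOn_Icc (a := 0) (b := t)).mono_set Set.Ioo_subset_Icc_self
      · intro s hs
        simpa [smul_eq_mul] using (hub₂ s hs).symm
    have hint₁' : IntegrableOn (fun x => (g t x)^2) (Set.Ioc (-(c*t)) (y t)) :=
      hint₁.congr_set_ae (Ioo_ae_eq_Ioc (a := -(c*t)) (b := y t)).symm
    have hint₂' : IntegrableOn (fun x => (g t x)^2) (Set.Ioc (y t) (c*t)) :=
      hint₂.congr_set_ae (Ioo_ae_eq_Ioc (a := y t) (b := c*t)).symm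
    -- assembling
    obtain ⟨hb₁, hb₂⟩ := hyb t ht.le
    have hindi : (fun x => (g t x)^2)
        = Set.indicator (Set.Icc (-(c*t)) (c*t)) (fun x => (g t x)^2) := by
      funext x
      by_cases hx : x ∈ Set.Icc (-(c*t)) (c*t)
      · rw [Set.indicator_of_mem hx]
      · rw [Set.indicator_of_notMem hx, hg3 t ht x hx]
        ring
    calc ∫ x : ℝ, (g t x)^2
        = ∫ x in Set.Icc (-(c*t)) (c*t), (g t x)^2 := by
          conv_lhs => rw [hindi]
          rw [integral_indicator measurableSet_Icc]
      _ = ∫ x in Set.Ioc (-(c*t)) (c*t), (g t x)^2 :=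
          (setIntegral_congr_set Ioc_ae_eq_Icc).symm
      _ = (∫ x in Set.Ioc (-(c*t)) (y t), (g t x)^2)
            + ∫ x in Set.Ioc (y t) (c*t), (g t x)^2 := by
          rw [← Set.Ioc_union_Ioc_eq_Ioc hb₁ hb₂]
          exact setIntegral_union (Set.Ioc_disjoint_Ioc_of_le le_rfl) measurableSet_Ioc hint₁' hint₂'
      _ = (∫ x in Set.Ioo (-(c*t)) (y t), (g t x)^2)
            + ∫ x in Set.Ioo (y t) (c*t), (g t x)^2 := by
          rw [setIntegral_congr_set (Ioo_ae_eq_Ioc (a := -(c*t)) (b := y t)).symm,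
            setIntegral_congr_set (Ioo_ae_eq_Ioc (a := y t) (b := c*t)).symm]
      _ = (∫ s in Set.Ioo (0:ℝ) t, (β/(2*c))^2 * (1/(c + w s)))
            + ∫ s in Set.Ioo (0:ℝ) t, (β/(2*c))^2 * (1/(c - w s)) := by
          rw [hcv₁, hcv₂]
      _ = (∫ s in (0:ℝ)..t, (β/(2*c))^2 * (1/(c + w s)))
            + ∫ s in (0:ℝ)..t, (β/(2*c))^2 * (1/(c - w s)) := by
          rw [intervalIntegral.integral_of_le ht.le, intervalIntegral.integral_of_le ht.le,
            setIntegral_congr_set (Ioo_ae_eq_Ioc (a := (0:ℝ)) (b := t)),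
            setIntegral_congr_set (Ioo_ae_eq_Ioc (a := (0:ℝ)) (b := t))]
  -- the reduced energy function
  set K : ℝ → ℝ := fun r => (m/2) * (v r)^2
      + 2 * ((c^2/2) * ((∫ s in (0:ℝ)..r, (β/(2*c))^2 * (1/(c + w s)))
        + ∫ s in (0:ℝ)..r, (β/(2*c))^2 * (1/(c - w s))))
      + (-(β^2/(2*c)) * r) with hK
  have hHK : ∀ r : ℝ, 0 < r → H r = K r := by
    intro r hr
    rw [hH, key r hr]
  have hKd : ∀ r : ℝ, 0 ≤ r → HasDerivAt K 0 r := by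
    intro r hr
    have hD := hv r hr
    have h1 : HasDerivAt (fun u => (m/2) * (v u)^2)
        ((m/2) * (2 * v r * (-(β^2/(2*c)) * (v r / (c^2 - (v r)^2)) / m))) r := by
      have := (hD.pow 2).const_mul (m/2)
      simpa [mul_assoc] using this
    have h2 : HasDerivAt (fun u => ∫ s in (0:ℝ)..u, (β/(2*c))^2 * (1/(c + w s)))
        ((β/(2*c))^2 * (1/(c + w r))) r := (hcont₁.integral_hasStrictDerivAt 0 r).hasDerivAt
    have h3 : HasDerivAt (fun u => ∫ s in (0:ℝ)..u, (β/(2*c))^2 * (1/(c - w s)))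
        ((β/(2*c))^2 * (1/(c - w r))) r := (hcont₂.integral_hasStrictDerivAt 0 r).hasDerivAt
    have h4 : HasDerivAt (fun u : ℝ => -(β^2/(2*c)) * u) (-(β^2/(2*c))) r := by
      simpa using (hasDerivAt_id r).const_mul (-(β^2/(2*c)))
    have htot := (h1.add (((h2.add h3).const_mul (c^2/2)).const_mul 2)).add h4
    have hz : (m/2) * (2 * v r * (-(β^2/(2*c)) * (v r / (c^2 - (v r)^2)) / m))
        + 2 * ((c^2/2) * ((β/(2*c))^2 * (1/(c + w r)) + (β/(2*c))^2 * (1/(c - w r))))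
        + (-(β^2/(2*c))) = 0 := by
      have hwr : w r = v r := hws r hr
      have h5 : 0 < c + v r := by rw [← hwr]; exact (hvpos r).1
      have h6 : 0 < c - v r := by rw [← hwr]; exact (hvpos r).2
      have h7 : c^2 - (v r)^2 ≠ 0 := by nlinarith
      rw [hwr]
      field_simp
      ring
    rw [← hz]
    exact htot
  -- conclusion
  intro t₁ ht₁ t₂ ht₂
  have h₀ : ∀ x ∈ Set.uIcc t₁ t₂, HasDerivAt K ((fun _ : ℝ => (0:ℝ)) x) x := by
    intro x hx
    exact hKd x (le_trans (le_min ht₁.le ht₂.le) hx.1)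
  have hFTC := intervalIntegral.integral_eq_sub_of_hasDerivAt h₀ intervalIntegrable_const
  simp only [intervalIntegral.integral_const, smul_zero] at hFTC
  rw [hHK t₁ ht₁, hHK t₂ ht₂]
  linarith
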